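/- Let g : ℝ^p → ℝ^p be differentiable on a convex open set D₀ with derivative Dg that is K-Lipschitz on D₀ (i.e., ‖Dg(x) − Dg(y)‖ ≤ K‖x − y‖ in operator norm for all x, y ∈ D₀). Let x̂ ∈ D₀ be such that Dg(x̂) is invertible with ‖[Dg(x̂)]⁻¹‖ ≤ B and ‖g(x̂)‖ ≤ ε. If h := B² K ε satisfies 0 < h ≤ 1/2 and the closed ball {x : ‖x − x̂‖ ≤ 2Bε} is contained in D₀, then there exists x̃ with g(x̃) = 0 and ‖x̃ − x̂‖ ≤ 2 B ε. -/

import Mathlib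

open Metric Set Filter Topology

set_option maxHeartbeats 1000000

/-- Quantitative Newton/Kantorovich step for `g : ℝ^p → ℝ^p`: if `g` is
differentiable on a convex open set `D₀` with `K`-Lipschitz derivative, `xhat ∈ D₀`
is a point at which the derivative has a bounded inverse of norm at most `B`,
`‖g(xhat)‖ ≤ ε`, `h := B²Kε` satisfies `0 < h ≤ 1/2`, and the closed ball of
radius `2Bε` around `xhat` lies in `D₀`, then there exists `xtilde` with `g(xtilde) = 0`
and `‖xtilde − xhat‖ ≤ 2Bε`. -/
theorem newton_zero_exists
    {p : ℕ} (B K ε : ℝ) (hB : 0 ≤ B) (hK : 0 ≤ K) (hε : 0 ≤ ε)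
    (g : EuclideanSpace ℝ (Fin p) → EuclideanSpace ℝ (Fin p))
    (Dg : EuclideanSpace ℝ (Fin p) →
      EuclideanSpace ℝ (Fin p) →L[ℝ] EuclideanSpace ℝ (Fin p))
    (D₀ : Set (EuclideanSpace ℝ (Fin p)))
    (hopen : IsOpen D₀) (hconv : Convex ℝ D₀)
    (hderiv : ∀ x ∈ D₀, HasFDerivAt g (Dg x) x)
    (hLip : ∀ x ∈ D₀, ∀ y ∈ D₀, ‖Dg x - Dg y‖ ≤ K * ‖x - y‖)
    (xhat : EuclideanSpace ℝ (Fin p)) (hxhat : xhat ∈ D₀)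
    (inv : EuclideanSpace ℝ (Fin p) →L[ℝ] EuclideanSpace ℝ (Fin p))
    (hinvl : inv.comp (Dg xhat) = ContinuousLinearMap.id ℝ _)
    (hinvr : (Dg xhat).comp inv = ContinuousLinearMap.id ℝ _)
    (hinvB : ‖inv‖ ≤ B) (hgε : ‖g xhat‖ ≤ ε)
    (hpos : 0 < B ^ 2 * K * ε) (hhalf : B ^ 2 * K * ε ≤ 1 / 2)
    (hball : Metric.closedBall xhat (2 * B * ε) ⊆ D₀) :
    ∃ xtilde : EuclideanSpace ℝ (Fin p), g xtilde = 0 ∧ ‖xtilde - xhat‖ ≤ 2 * B * ε := by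
  have hB0 : 0 < B := by
    rcases hB.lt_or_eq with h | h
    · exact h
    · exfalso; rw [← h] at hpos; norm_num at hpos
  have hε0 : 0 < ε := by
    rcases hε.lt_or_eq with h | h
    · exact h
    · exfalso; rw [← h] at hpos; norm_num at hpos
  set r : ℝ := 2 * B * ε with hrdef
  have hr0 : 0 < r := by positivity
  have hballconv : Convex ℝ (Metric.closedBall xhat r) := convex_closedBall _ _
  have hmemball : ∀ {x}, x ∈ Metric.closedBall xhat r → ‖x - xhat‖ ≤ r := by
    intro x hx
    rw [← dist_eq_norm]
    exact Metric.mem_closedBall.mp hx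
  -- `inv` inverts `Dg xhat` pointwise
  have hinvapp : ∀ v, inv (Dg xhat v) = v := by
    intro v
    have := ContinuousLinearMap.ext_iff.mp hinvl v
    simpa using this
  have happinv : ∀ v, Dg xhat (inv v) = v := by
    intro v
    have := ContinuousLinearMap.ext_iff.mp hinvr v
    simpa using this
  -- key quadratic Taylor estimate
  have key : ∀ x ∈ Metric.closedBall xhat r,
      ‖g x - g xhat - Dg xhat (x - xhat)‖ ≤ K / 2 * ‖x - xhat‖ ^ 2 := by
    intro x hx
    set u := x - xhat with hu
    set γ : ℝ → EuclideanSpace ℝ (Fin p) := fun t => xhat + t • u with hγ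
    have hγmem : ∀ t ∈ Icc (0:ℝ) 1, γ t ∈ Metric.closedBall xhat r := by
      intro t ht
      have h1 : ‖γ t - xhat‖ = t * ‖u‖ := by
        simp [hγ, norm_smul, abs_of_nonneg ht.1]
      rw [Metric.mem_closedBall, dist_eq_norm, h1]
      calc t * ‖u‖ ≤ 1 * ‖u‖ := by gcongr; exact ht.2
        _ = ‖u‖ := one_mul _
        _ ≤ r := hmemball hx
    have hγderiv : ∀ t : ℝ, HasDerivAt γ u t := by
      intro t
      have := ((hasDerivAt_id t).smul_const u).const_add xhat
      rw [one_smul] at this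
      exact this
    set f : ℝ → EuclideanSpace ℝ (Fin p) :=
      fun t => g (γ t) - g xhat - t • (Dg xhat u) with hf
    have hfderiv : ∀ t ∈ Icc (0:ℝ) 1, HasDerivAt f (Dg (γ t) u - Dg xhat u) t := by
      intro t ht
      have h1 : HasDerivAt (fun s => g (γ s)) (Dg (γ t) u) t :=
        (hderiv _ (hball (hγmem t ht))).comp_hasDerivAt t (hγderiv t)
      exact (h1.sub_const (g xhat)).sub (by simpa only [one_smul] using (hasDerivAt_id' t).smul_const (Dg xhat u))
    have hfcont : ContinuousOn f (Icc (0:ℝ) 1) := fun t ht =>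
      (hfderiv t ht).continuousAt.continuousWithinAt
    have hBderiv : ∀ t : ℝ, HasDerivAt (fun s => K / 2 * ‖u‖ ^ 2 * s ^ 2)
        (K * ‖u‖ ^ 2 * t) t := by
      intro t
      have := (hasDerivAt_pow 2 t).const_mul (K / 2 * ‖u‖ ^ 2)
      refine this.congr_deriv ?_
      push_cast
      ring
    have hbound : ∀ t ∈ Ico (0:ℝ) 1, ‖Dg (γ t) u - Dg xhat u‖ ≤ K * ‖u‖ ^ 2 * t := by
      intro t ht
      have h1 : Dg (γ t) u - Dg xhat u = (Dg (γ t) - Dg xhat) u := by simp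
      have h2 : ‖γ t - xhat‖ = t * ‖u‖ := by
        simp [hγ, norm_smul, abs_of_nonneg ht.1]
      calc ‖Dg (γ t) u - Dg xhat u‖ = ‖(Dg (γ t) - Dg xhat) u‖ := by rw [h1]
        _ ≤ ‖Dg (γ t) - Dg xhat‖ * ‖u‖ := ContinuousLinearMap.le_opNorm _ _
        _ ≤ (K * ‖γ t - xhat‖) * ‖u‖ := by
            gcongr
            exact hLip _ (hball (hγmem t (Ico_subset_Icc_self ht))) _ hxhat
        _ = K * ‖u‖ ^ 2 * t := by rw [h2]; ring
    have h0 : ‖f 0‖ ≤ K / 2 * ‖u‖ ^ 2 * (0:ℝ) ^ 2 := by simp [hf, hγ]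
    have := image_norm_le_of_norm_deriv_right_le_deriv_boundary hfcont
      (fun t ht => (hfderiv t (Ico_subset_Icc_self ht)).hasDerivWithinAt)
      h0 hBderiv hbound (right_mem_Icc.mpr zero_le_one)
    have hγ1 : γ 1 = x := by simp [hγ, hu]
    have hf1 : f 1 = g x - g xhat - Dg xhat u := by simp [hf, hγ1]
    rw [hf1] at this
    simpa using this
  -- the simplified Newton map
  set T : EuclideanSpace ℝ (Fin p) → EuclideanSpace ℝ (Fin p) :=
    fun x => x - inv (g x) with hT
  have hTself : ∀ x ∈ Metric.closedBall xhat r, T x ∈ Metric.closedBall xhat r := by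
    intro x hx
    have hsplit : inv (g x) = inv (g xhat) + inv (g x - g xhat - Dg xhat (x - xhat))
        + (x - xhat) := by
      calc inv (g x)
          = inv (g xhat + (g x - g xhat - Dg xhat (x - xhat)) + Dg xhat (x - xhat)) := by
            congr 1; abel
        _ = inv (g xhat) + inv (g x - g xhat - Dg xhat (x - xhat))
            + inv (Dg xhat (x - xhat)) := by rw [map_add, map_add]
        _ = _ := by rw [hinvapp]
    have h1 : T x - xhat = -(inv (g xhat)) - inv (g x - g xhat - Dg xhat (x - xhat)) := by
      simp only [hT]
      rw [hsplit]
      abel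
    rw [Metric.mem_closedBall, dist_eq_norm, h1]
    have h2 : ‖inv (g xhat)‖ ≤ B * ε :=
      (inv.le_opNorm _).trans (mul_le_mul hinvB hgε (norm_nonneg _) hB)
    have h3 : ‖inv (g x - g xhat - Dg xhat (x - xhat))‖ ≤ B * (K / 2 * ‖x - xhat‖ ^ 2) :=
      (inv.le_opNorm _).trans (mul_le_mul hinvB (key x hx) (norm_nonneg _) hB)
    have h4 : ‖x - xhat‖ ≤ r := hmemball hx
    have h5 : ‖-(inv (g xhat)) - inv (g x - g xhat - Dg xhat (x - xhat))‖
        ≤ ‖inv (g xhat)‖ + ‖inv (g x - g xhat - Dg xhat (x - xhat))‖ := by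
      simpa using norm_sub_le (-(inv (g xhat))) _
    have h6 : ‖x - xhat‖ ^ 2 ≤ r ^ 2 := pow_le_pow_left₀ (norm_nonneg _) h4 2
    have h7 : ‖inv (g x - g xhat - Dg xhat (x - xhat))‖ ≤ B * (K / 2 * r ^ 2) := by
      refine h3.trans ?_
      have hBK : 0 ≤ B * (K / 2) := by positivity
      nlinarith
    have hr2 : r ^ 2 = 4 * B ^ 2 * ε ^ 2 := by rw [hrdef]; ring
    calc ‖-(inv (g xhat)) - inv (g x - g xhat - Dg xhat (x - xhat))‖
        ≤ ‖inv (g xhat)‖ + ‖inv (g x - g xhat - Dg xhat (x - xhat))‖ := h5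
      _ ≤ B * ε + B * (K / 2 * r ^ 2) := by linarith
      _ ≤ r := by rw [hr2, hrdef]; nlinarith [mul_pos hB0 hε0]
  have hTlip : ∀ x ∈ Metric.closedBall xhat r, ∀ y ∈ Metric.closedBall xhat r,
      ‖T x - T y‖ ≤ 1 * ‖x - y‖ := by
    intro x hx y hy
    have hd : ∀ z ∈ Metric.closedBall xhat r, HasFDerivWithinAt T
        (ContinuousLinearMap.id ℝ _ - inv.comp (Dg z)) (Metric.closedBall xhat r) z := by
      intro z hz
      exact ((hasFDerivAt_id z).sub
        (inv.hasFDerivAt.comp z (hderiv z (hball hz)))).hasFDerivWithinAt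
    have hbd : ∀ z ∈ Metric.closedBall xhat r,
        ‖ContinuousLinearMap.id ℝ _ - inv.comp (Dg z)‖ ≤ 1 := by
      intro z hz
      have he : ContinuousLinearMap.id ℝ _ - inv.comp (Dg z)
          = inv.comp (Dg xhat - Dg z) := by
        rw [ContinuousLinearMap.comp_sub, hinvl]
      rw [he]
      have h2 : ‖Dg xhat - Dg z‖ ≤ K * r := by
        refine (hLip xhat hxhat z (hball hz)).trans ?_
        have : ‖xhat - z‖ ≤ r := by rw [norm_sub_rev]; exact hmemball hz
        gcongr
      calc ‖inv.comp (Dg xhat - Dg z)‖ ≤ ‖inv‖ * ‖Dg xhat - Dg z‖ :=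
            ContinuousLinearMap.opNorm_comp_le _ _
        _ ≤ B * (K * r) := mul_le_mul hinvB h2 (norm_nonneg _) hB
        _ ≤ 1 := by rw [hrdef]; nlinarith
    exact hballconv.norm_image_sub_le_of_norm_hasFDerivWithin_le hd hbd hy hx
  -- approximate fixed points
  have main : ∀ n : ℕ, ∃ x ∈ Metric.closedBall xhat r, ‖T x - x‖ ≤ r / (n + 1) := by
    intro n
    set lam : ℝ := (n : ℝ) / (n + 1) with hlam
    have hn1 : (0:ℝ) < (n : ℝ) + 1 := by positivity
    have hlam0 : 0 ≤ lam := by positivity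
    have hlam1 : lam < 1 := by
      rw [hlam, div_lt_one hn1]
      linarith
    set F : EuclideanSpace ℝ (Fin p) → EuclideanSpace ℝ (Fin p) :=
      fun x => xhat + lam • (T x - xhat) with hF
    have hmapsto : MapsTo F (Metric.closedBall xhat r) (Metric.closedBall xhat r) := by
      intro x hx
      have h1 : ‖F x - xhat‖ = lam * ‖T x - xhat‖ := by
        simp [hF, norm_smul, abs_of_nonneg hlam0]
      rw [Metric.mem_closedBall, dist_eq_norm, h1]
      calc lam * ‖T x - xhat‖ ≤ 1 * r :=
            mul_le_mul hlam1.le (hmemball (hTself x hx)) (norm_nonneg _) zero_le_one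
        _ = r := one_mul r
    set Knn : NNReal := ⟨lam, hlam0⟩ with hKnn
    have hcontr : ContractingWith Knn (hmapsto.restrict F _ _) := by
      constructor
      · exact_mod_cast hlam1
      · apply LipschitzWith.of_dist_le_mul
        rintro ⟨x, hx⟩ ⟨y, hy⟩
        have h1 : F x - F y = lam • (T x - T y) := by
          simp only [hF, smul_sub]
          abel
        have h2 : dist (F x) (F y) = lam * ‖T x - T y‖ := by
          rw [dist_eq_norm, h1, norm_smul, Real.norm_eq_abs, abs_of_nonneg hlam0]
        show dist (F x) (F y) ≤ Knn * dist (⟨x, hx⟩ : Metric.closedBall xhat r) ⟨y, hy⟩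
        rw [h2, Subtype.dist_eq, dist_eq_norm]
        calc lam * ‖T x - T y‖ ≤ lam * (1 * ‖x - y‖) := by
              have := hTlip x hx y hy
              gcongr
          _ = Knn * ‖x - y‖ := by rw [one_mul]; rfl
    obtain ⟨y, hy_mem, hy_fix, -, -⟩ := ContractingWith.exists_fixedPoint'
      (Metric.isClosed_closedBall.isComplete) hmapsto hcontr
      (Metric.mem_closedBall_self hr0.le) (edist_ne_top _ _)
    refine ⟨y, hy_mem, ?_⟩
    have h3 : xhat + lam • (T y - xhat) = y := hy_fix
    have h4 : T y - y = (1 - lam) • (T y - xhat) := by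
      nth_rewrite 2 [← h3]
      rw [sub_smul, one_smul]
      abel
    have h5 : (1 : ℝ) - lam = 1 / (n + 1) := by
      rw [hlam]
      field_simp
      ring
    rw [h4, norm_smul, Real.norm_eq_abs, abs_of_nonneg (by linarith : (0:ℝ) ≤ 1 - lam), h5]
    calc 1 / ((n:ℝ) + 1) * ‖T y - xhat‖ ≤ 1 / ((n:ℝ) + 1) * r := by
          gcongr
          exact hmemball (hTself y hy_mem)
      _ = r / (n + 1) := by ring
  choose xs hxs hxsT using main
  obtain ⟨xt, hxt_mem, φ, hφmono, hφtend⟩ :=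
    (isCompact_closedBall xhat r).tendsto_subseq hxs
  have hbound : ∀ n : ℕ, ‖T xt - xt‖ ≤ 2 * dist (xs (φ n)) xt + r / (n + 1) := by
    intro n
    have h1 : ‖T xt - T (xs (φ n))‖ ≤ 1 * ‖xt - xs (φ n)‖ :=
      hTlip _ hxt_mem _ (hxs _)
    have h2 := hxsT (φ n)
    have h3 : r / ((φ n : ℝ) + 1) ≤ r / ((n : ℝ) + 1) := by
      have : (n:ℝ) + 1 ≤ (φ n : ℝ) + 1 := by
        have h := hφmono.le_apply (x := n)
        have : (n:ℝ) ≤ (φ n : ℝ) := by exact_mod_cast h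
        linarith
      exact div_le_div_of_nonneg_left hr0.le (by positivity) this
    have h4 : ‖T xt - xt‖ ≤ ‖T xt - T (xs (φ n))‖ + ‖T (xs (φ n)) - xs (φ n)‖
        + ‖xs (φ n) - xt‖ := by
      calc ‖T xt - xt‖ ≤ ‖T xt - xs (φ n)‖ + ‖xs (φ n) - xt‖ := norm_sub_le_norm_sub_add_norm_sub _ _ _
        _ ≤ (‖T xt - T (xs (φ n))‖ + ‖T (xs (φ n)) - xs (φ n)‖) + ‖xs (φ n) - xt‖ := by
            gcongr
            exact norm_sub_le_norm_sub_add_norm_sub _ _ _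
        _ = _ := by ring
    have h5 : ‖xt - xs (φ n)‖ = dist (xs (φ n)) xt := by
      rw [norm_sub_rev, dist_eq_norm]
    have h6 : ‖xs (φ n) - xt‖ = dist (xs (φ n)) xt := (dist_eq_norm (xs (φ n)) xt).symm
    calc ‖T xt - xt‖ ≤ ‖T xt - T (xs (φ n))‖ + ‖T (xs (φ n)) - xs (φ n)‖
        + ‖xs (φ n) - xt‖ := h4
      _ ≤ 1 * ‖xt - xs (φ n)‖ + r / ((φ n : ℝ) + 1) + ‖xs (φ n) - xt‖ := by gcongr
      _ ≤ 1 * dist (xs (φ n)) xt + r / ((n:ℝ) + 1) + dist (xs (φ n)) xt := by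
          rw [h5, h6]; gcongr
      _ = 2 * dist (xs (φ n)) xt + r / (n + 1) := by ring
  have t1 : Tendsto (fun n => dist (xs (φ n)) xt) atTop (𝓝 0) :=
    tendsto_iff_dist_tendsto_zero.mp hφtend
  have t2 : Tendsto (fun n : ℕ => r / ((n : ℝ) + 1)) atTop (𝓝 0) := by
    have := tendsto_one_div_add_atTop_nhds_zero_nat.const_mul r
    simpa [div_eq_mul_inv, mul_comm] using this
  have htend : Tendsto (fun n : ℕ => 2 * dist (xs (φ n)) xt + r / ((n:ℝ) + 1))
      atTop (𝓝 0) := by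
    have := (t1.const_mul 2).add t2
    simpa using this
  have hzero : ‖T xt - xt‖ ≤ 0 := ge_of_tendsto' htend hbound
  have hfix : T xt = xt := by
    have := norm_le_zero_iff.mp hzero
    exact sub_eq_zero.mp this
  have hinv0 : inv (g xt) = 0 := by
    have h1 : xt - inv (g xt) = xt := hfix
    have := sub_eq_self.mp h1
    exact this
  have hg0 : g xt = 0 := by
    have h1 := happinv (g xt)
    rw [hinv0, map_zero] at h1
    exact h1.symm
  exact ⟨xt, hg0, hmemball hxt_mem⟩
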